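/- Let K be a field, E a 2-dimensional K-vector space with basis {X,Y}, and m, l ≥ 1. The K-linear map ζ from the S_m-invariants Sym_m(Sym^l E) ⊆ (Sym^l E)^{⊗m} to Λ^m(Sym^{l+m-1} E), defined as the restriction of the map (Sym^l E)^{⊗m} → Λ^m(Sym^{l+m-1} E) sending ⊗_{j=1}^m X^{i_j}Y^{l-i_j} to ∧_{j=1}^m X^{i_j+m-j}Y^{l-i_j+j-1}, is injective. -/

import Mathlib

open scoped TensorProduct
open MvPolynomial

set_option synthInstance.maxHeartbeats 1000000
set_option maxHeartbeats 2000000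

noncomputable section

variable (K : Type*) [Field K]

/-- `Sym^r E` realised as the homogeneous polynomials of degree `r` in the two
variables `X = X 0`, `Y = X 1`, with basis `{X^i Y^{r-i} : 0 ≤ i ≤ r}`. -/
abbrev homog (r : ℕ) : Submodule K (MvPolynomial (Fin 2) K) :=
  homogeneousSubmodule (Fin 2) K r

/-- The invariant symmetric power `Sym_m W ⊆ W^{⊗m}`: the `S_m`-invariants of
the place permutation action. -/
def SymInv (W : Type*) [AddCommGroup W] [Module K W] (m : ℕ) :
    Submodule K (⨂[K]^m W) :=
  ⨅ σ : Equiv.Perm (Fin m),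
    LinearMap.eqLocus (PiTensorProduct.reindex K (fun _ => W) σ).toLinearMap LinearMap.id

/-- Multiplication by the monomial `X^{m-j}Y^{j-1}` (`j` 1-indexed; with our
0-indexed tensor factors the `j`-th monomial is `X^{m-1-j}Y^{j}`), as a linear
map `Sym^l E → Sym^{l+m-1} E`. -/
def mulMono (l m : ℕ) (j : Fin m) : homog K l →ₗ[K] homog K (l + m - 1) :=
  LinearMap.codRestrict _
    ((LinearMap.mulRight K
        ((X 0 : MvPolynomial (Fin 2) K) ^ (m - 1 - (j : ℕ)) * X 1 ^ (j : ℕ))).comp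
      (homog K l).subtype)
    (fun x => by
      have hx : (x : MvPolynomial (Fin 2) K).IsHomogeneous l :=
        (mem_homogeneousSubmodule _ _).mp x.2
      have hmono : ((X 0 : MvPolynomial (Fin 2) K) ^ (m - 1 - (j : ℕ))
          * X 1 ^ (j : ℕ)).IsHomogeneous (m - 1) := by
        have := (isHomogeneous_X_pow (R := K) (0 : Fin 2) (m - 1 - (j : ℕ))).mul
          (isHomogeneous_X_pow (R := K) (1 : Fin 2) (j : ℕ))
        have hj : m - 1 - (j : ℕ) + (j : ℕ) = m - 1 := by omega
        rwa [hj] at this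
      have h := hx.mul hmono
      have hl : l + (m - 1) = l + m - 1 := by
        have := j.2; omega
      rw [hl] at h
      show ((LinearMap.mulRight K _).comp (homog K l).subtype) x ∈ homog K (l + m - 1)
      simp only [LinearMap.coe_comp, Function.comp_apply, Submodule.coe_subtype,
        LinearMap.mulRight_apply]
      exact (mem_homogeneousSubmodule _ _).mpr h)

/-- The `K`-linear extension of
`⊗ⱼ wⱼ ↦ (X^{m-1}Y⁰·w₁) ∧ ⋯ ∧ (X⁰Y^{m-1}·w_m)`, with values in the exterior
algebra of `Sym^{l+m-1} E`. -/
def zetaAux (l m : ℕ) :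
    (⨂[K]^m ↥(homog K l)) →ₗ[K] ExteriorAlgebra K ↥(homog K (l + m - 1)) :=
  PiTensorProduct.lift
    ((ExteriorAlgebra.ιMulti K m
        (M := ↥(homog K (l + m - 1)))).toMultilinearMap.compLinearMap
      (fun j : Fin m => mulMono K l m j))

lemma zetaAux_mem (l m : ℕ) (x : ⨂[K]^m ↥(homog K l)) :
    zetaAux K l m x ∈ ⋀[K]^m ↥(homog K (l + m - 1)) := by
  have hx : x ∈ Submodule.span K
      (Set.range (PiTensorProduct.tprod K (s := fun _ : Fin m => ↥(homog K l)))) := by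
    rw [PiTensorProduct.span_tprod_eq_top]; trivial
  induction hx using Submodule.span_induction with
  | mem w hw =>
    obtain ⟨v, rfl⟩ := hw
    rw [zetaAux, PiTensorProduct.lift.tprod]
    exact ExteriorAlgebra.ιMulti_range K m ⟨fun j => mulMono K l m j (v j), rfl⟩
  | zero => simp
  | add a b ha hb pa pb => rw [map_add]; exact Submodule.add_mem _ pa pb
  | smul c a ha pa => rw [map_smul]; exact Submodule.smul_mem _ c pa

/-- The map `ζ : (Sym^l E)^{⊗m} → Λ^m (Sym^{l+m-1} E)` sending
`⊗ⱼ X^{iⱼ}Y^{l-iⱼ} ↦ ∧ⱼ X^{iⱼ+m-j}Y^{l-iⱼ+j-1}` (1-indexed `j`). -/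
def zeta (l m : ℕ) :
    (⨂[K]^m ↥(homog K l)) →ₗ[K] ↥(⋀[K]^m ↥(homog K (l + m - 1))) :=
  LinearMap.codRestrict _ (zetaAux K l m) (zetaAux_mem K l m)

/-- exponent finsupp of the monomial `X^i Y^{r-i}` -/
def dexp (r : ℕ) (i : Fin (r+1)) : Fin 2 →₀ ℕ :=
  Finsupp.single 0 (i : ℕ) + Finsupp.single 1 (r - (i : ℕ))

lemma fin2_degree (d : Fin 2 →₀ ℕ) : d.degree = d 0 + d 1 := by
  rw [Finsupp.degree]
  rw [show d 0 + d 1 = ∑ a : Fin 2, d a from (Fin.sum_univ_two (fun a => d a)).symm]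
  exact Finset.sum_subset (Finset.subset_univ _)
    (fun a _ ha => Finsupp.notMem_support_iff.mp ha)

lemma dexp_apply0 (r : ℕ) (i : Fin (r+1)) : dexp r i 0 = (i : ℕ) := by
  simp [dexp, Finsupp.single_apply]

lemma dexp_apply1 (r : ℕ) (i : Fin (r+1)) : dexp r i 1 = r - (i : ℕ) := by
  simp [dexp, Finsupp.single_apply]

lemma dexp_degree (r : ℕ) (i : Fin (r+1)) : (dexp r i).degree = r := by
  rw [fin2_degree, dexp_apply0, dexp_apply1]
  have := i.2
  omega

lemma dexp_inj (r : ℕ) {i i' : Fin (r+1)} (h : dexp r i = dexp r i') : i = i' := by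
  have h0 := DFunLike.congr_fun h 0
  rw [dexp_apply0, dexp_apply0] at h0
  exact Fin.ext h0

lemma fin2_eq_dexp (r : ℕ) (d : Fin 2 →₀ ℕ) (hd : d.degree = r) :
    d = dexp r ⟨d 0, by rw [fin2_degree] at hd; omega⟩ := by
  rw [fin2_degree] at hd
  ext a
  fin_cases a <;> simp [dexp, Finsupp.single_apply] <;> omega

/-- the basis element `X^i Y^{r-i}` of `homog K r` -/
def bElt (r : ℕ) (i : Fin (r+1)) : homog K r :=
  ⟨monomial (dexp r i) 1, by
    rw [mem_homogeneousSubmodule]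
    exact isHomogeneous_monomial 1 (dexp_degree r i)⟩

/-- coordinate functional -/
def coordF (r : ℕ) (i : Fin (r+1)) : ↥(homog K r) →ₗ[K] K :=
  (lcoeff K (dexp r i)).comp (homog K r).subtype

lemma coordF_apply (r : ℕ) (i : Fin (r+1)) (p : homog K r) :
    coordF K r i p = coeff (dexp r i) (p : MvPolynomial (Fin 2) K) := rfl

lemma coordF_bElt (r : ℕ) (i j : Fin (r+1)) :
    coordF K r i (bElt K r j) = if j = i then 1 else 0 := by
  rw [coordF_apply]
  show coeff (dexp r i) (monomial (dexp r j) 1) = _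
  rw [coeff_monomial]
  by_cases h : j = i
  · subst h; simp
  · rw [if_neg (fun hc => h (dexp_inj r hc)), if_neg h]

lemma homog_expand (r : ℕ) (p : homog K r) :
    p = ∑ i : Fin (r+1), coordF K r i p • bElt K r i := by
  have hp : (p : MvPolynomial (Fin 2) K).IsHomogeneous r := (mem_homogeneousSubmodule _ _).mp p.2
  apply Subtype.ext
  rw [Submodule.coe_sum]
  apply MvPolynomial.ext
  intro d
  rw [MvPolynomial.coeff_sum]
  simp only [Submodule.coe_smul, coeff_smul, smul_eq_mul]
  have hb : ∀ i : Fin (r+1), coeff d ((bElt K r i : MvPolynomial (Fin 2) K)) =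
      if dexp r i = d then 1 else 0 := fun i => coeff_monomial d (dexp r i) 1
  by_cases hd : d.degree = r
  · have hde := fin2_eq_dexp r d hd
    set i0 : Fin (r+1) := ⟨d 0, by rw [fin2_degree] at hd; omega⟩
    rw [Finset.sum_eq_single i0]
    · rw [hb i0, if_pos hde.symm, mul_one, coordF_apply, ← hde]
    · intro i _ hi
      rw [hb i, if_neg, mul_zero]
      intro hc
      exact hi (dexp_inj r (hc.trans hde))
    · intro h; exact absurd (Finset.mem_univ i0) h
  · rw [hp.coeff_eq_zero hd]
    symm
    apply Finset.sum_eq_zero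
    intro i _
    rw [hb i, if_neg, mul_zero]
    intro hc
    exact hd (hc ▸ dexp_degree r i)

def sIdx (l m : ℕ) (u : Fin m → Fin (l+1)) (j : Fin m) : Fin (l+m-1+1) :=
  ⟨(u j : ℕ) + (m-1-(j : ℕ)), by have := (u j).2; omega⟩

/-- product-of-coordinates functional on the tensor power -/
def psi (l m : ℕ) (t : Fin m → Fin (l+1)) : (⨂[K]^m ↥(homog K l)) →ₗ[K] K :=
  PiTensorProduct.lift
    ((MultilinearMap.mkPiAlgebra K (Fin m) K).compLinearMap fun j => coordF K l (t j))

lemma psi_tprod (l m : ℕ) (t : Fin m → Fin (l+1)) (v : Fin m → ↥(homog K l)) :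
    psi K l m t (PiTensorProduct.tprod K v) = ∏ j, coordF K l (t j) (v j) := by
  simp [psi, PiTensorProduct.lift.tprod, MultilinearMap.compLinearMap_apply,
    MultilinearMap.mkPiAlgebra_apply]

lemma tensor_repr (l m : ℕ) (x : ⨂[K]^m ↥(homog K l)) :
    x = ∑ u : Fin m → Fin (l+1),
      psi K l m u x • (PiTensorProduct.tprod K) (fun j => bElt K l (u j)) := by
  have h : (∑ u : Fin m → Fin (l+1),
        (psi K l m u).smulRight ((PiTensorProduct.tprod K) fun j => bElt K l (u j)))
      = (LinearMap.id : _ →ₗ[K] ⨂[K]^m ↥(homog K l)) := by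
    ext v
    simp only [LinearMap.compMultilinearMap_apply, LinearMap.coe_sum, Finset.sum_apply,
      LinearMap.smulRight_apply, LinearMap.id_coe, id_eq]
    have hv : (PiTensorProduct.tprod K (s := fun _ : Fin m => ↥(homog K l))) v
        = ∑ u : Fin m → Fin (l+1), (∏ j, coordF K l (u j) (v j)) •
            PiTensorProduct.tprod K (fun j => bElt K l (u j)) := by
      conv_lhs => rw [show v = (fun j => ∑ i : Fin (l+1), coordF K l i (v j) • bElt K l i)
        from funext fun j => homog_expand K l (v j)]
      rw [MultilinearMap.map_sum]
      exact Finset.sum_congr rfl fun u _ => MultilinearMap.map_smul_univ _ _ _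
    conv_rhs => rw [hv]
    exact Finset.sum_congr rfl fun u _ => by rw [psi_tprod]
  conv_lhs => rw [show x = LinearMap.id (R := K) x from rfl, ← h]
  simp only [LinearMap.coe_sum, Finset.sum_apply, LinearMap.smulRight_apply]

lemma psi_reindex (l m : ℕ) (t : Fin m → Fin (l+1)) (σ : Equiv.Perm (Fin m))
    (x : ⨂[K]^m ↥(homog K l)) :
    psi K l m t ((PiTensorProduct.reindex K (fun _ => ↥(homog K l)) σ) x)
      = psi K l m (t ∘ σ) x := by
  have h : (psi K l m t).comp
        (PiTensorProduct.reindex K (fun _ => ↥(homog K l)) σ).toLinearMap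
      = psi K l m (t ∘ σ) := by
    ext v
    simp only [LinearMap.compMultilinearMap_apply, LinearMap.coe_comp, Function.comp_apply,
      LinearEquiv.coe_coe, PiTensorProduct.reindex_tprod, psi_tprod]
    rw [← Equiv.prod_comp σ (fun j => coordF K l (t j) (v (σ.symm j)))]
    exact Finset.prod_congr rfl fun i _ => by rw [Equiv.symm_apply_apply]
  exact DFunLike.congr_fun h x

lemma mulMono_bElt (l m : ℕ) (u : Fin m → Fin (l+1)) (j : Fin m) :
    mulMono K l m j (bElt K l (u j)) = bElt K (l+m-1) (sIdx l m u j) := by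
  apply Subtype.ext
  show (bElt K l (u j) : MvPolynomial (Fin 2) K) * (X 0 ^ (m-1-(j:ℕ)) * X 1 ^ (j:ℕ)) = _
  rw [show ((X 0 ^ (m-1-(j:ℕ)) * X 1 ^ (j:ℕ)) : MvPolynomial (Fin 2) K)
      = monomial (Finsupp.single 0 (m-1-(j:ℕ)) + Finsupp.single 1 (j:ℕ)) 1 by
    rw [X_pow_eq_monomial, X_pow_eq_monomial, monomial_mul, one_mul]]
  show monomial (dexp l (u j)) (1:K) * monomial _ 1 = monomial (dexp (l+m-1) (sIdx l m u j)) 1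
  rw [monomial_mul, one_mul]
  have h1 := (u j).2
  have h2 := j.2
  have hexp : dexp l (u j) + (Finsupp.single 0 (m-1-(j:ℕ)) + Finsupp.single 1 (j:ℕ))
      = dexp (l+m-1) (sIdx l m u j) := by
    ext a
    fin_cases a <;> simp [dexp, sIdx, Finsupp.single_apply] <;> omega
  rw [hexp]

lemma zetaAux_tprod (l m : ℕ) (v : Fin m → ↥(homog K l)) :
    zetaAux K l m (PiTensorProduct.tprod K v)
      = ExteriorAlgebra.ιMulti K m (fun j => mulMono K l m j (v j)) := by
  rw [zetaAux, PiTensorProduct.lift.tprod]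
  rfl

/-- alternating determinant-of-coordinates functional -/
def detF (l m : ℕ) (S : Fin m → Fin (l+m-1+1)) :
    (↥(homog K (l+m-1))) [⋀^Fin m]→ₗ[K] K :=
  (Matrix.detRowAlternating (R := K) (n := Fin m)).compLinearMap
    (LinearMap.pi fun i => coordF K (l+m-1) (S i))

def phiF (l m : ℕ) (S : Fin m → Fin (l+m-1+1)) :
    ExteriorAlgebra K ↥(homog K (l+m-1)) →ₗ[K] K :=
  ExteriorAlgebra.liftAlternating (fun n => if h : m = n then h ▸ detF K l m S else 0)

lemma phiF_ιMulti (l m : ℕ) (S : Fin m → Fin (l+m-1+1)) (v : Fin m → ↥(homog K (l+m-1))) :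
    phiF K l m S (ExteriorAlgebra.ιMulti K m v)
      = (Matrix.of fun j i => coordF K (l+m-1) (S i) (v j)).det := by
  rw [phiF, ExteriorAlgebra.liftAlternating_apply_ιMulti]
  rw [dif_pos rfl]
  rfl

lemma phiF_wedge (l m : ℕ) (S w : Fin m → Fin (l+m-1+1)) :
    phiF K l m S (ExteriorAlgebra.ιMulti K m fun j => bElt K (l+m-1) (w j))
      = (Matrix.of fun j i => if w j = S i then (1:K) else 0).det := by
  rw [phiF_ιMulti]
  congr 1
  ext j i
  simp only [Matrix.of_apply]
  rw [coordF_bElt]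

lemma det01_perm {m q : ℕ} {S w : Fin m → Fin q} (hS : Function.Injective S)
    (h : (Matrix.of fun j i => if w j = S i then (1:K) else 0).det ≠ 0) :
    ∃ ρ : Equiv.Perm (Fin m), ∀ j, w j = S (ρ j) := by
  have hrow : ∀ j, ∃ i, w j = S i := by
    intro j
    by_contra hc
    push_neg at hc
    exact h (Matrix.det_eq_zero_of_row_eq_zero j (fun i => by
      simp only [Matrix.of_apply, if_neg (hc i)]))
  choose ρ0 hρ0 using hrow
  have hinj : Function.Injective ρ0 := by
    intro j j' he
    by_contra hne
    apply h
    apply Matrix.det_zero_of_row_eq hne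
    funext i
    simp only [Matrix.of_apply]
    rw [hρ0 j, hρ0 j', he]
  exact ⟨Equiv.ofBijective ρ0 (Finite.injective_iff_bijective.mp hinj), hρ0⟩

lemma det01_id {m q : ℕ} {S : Fin m → Fin q} (hS : Function.Injective S) :
    (Matrix.of fun j i => if S j = S i then (1:K) else 0).det = 1 := by
  have h1 : (Matrix.of fun j i => if S j = S i then (1:K) else 0) = 1 := by
    ext j i
    simp only [Matrix.of_apply, Matrix.one_apply]
    by_cases hji : j = i
    · subst hji; simp
    · rw [if_neg (fun hc => hji (hS hc)), if_neg hji]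
  rw [h1, Matrix.det_one]

/-- the "base-(l+2) digits" rank of a tuple -/
def Nval (l m : ℕ) (w : Fin m → Fin (l+1)) : ℕ :=
  ∑ j : Fin m, (w j : ℕ) * (l+2)^(m-1-(j:ℕ))

lemma geo_sum (l : ℕ) : ∀ k, (l+1) * (∑ p ∈ Finset.range k, (l+2)^p) + 1 = (l+2)^k
  | 0 => by simp
  | (k+1) => by
      rw [Finset.sum_range_succ, pow_succ, ← geo_sum l k]
      ring

lemma Nval_lt (l m : ℕ) (w t : Fin m → Fin (l+1)) (j : Fin m)
    (hag : ∀ p : Fin m, (p:ℕ) < (j:ℕ) → w p = t p) (hlt : (t j:ℕ) < (w j:ℕ)) :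
    Nval l m t < Nval l m w := by
  classical
  have hsplit : ∀ v : Fin m → Fin (l+1), Nval l m v
      = (∑ p ∈ Finset.univ.filter (fun p : Fin m => (p:ℕ) < (j:ℕ)), (v p : ℕ) * (l+2)^(m-1-(p:ℕ)))
        + ((v j : ℕ) * (l+2)^(m-1-(j:ℕ))
        + (∑ p ∈ Finset.univ.filter (fun p : Fin m => (j:ℕ) < (p:ℕ)), (v p : ℕ) * (l+2)^(m-1-(p:ℕ)))) := by
    intro v
    rw [Nval, ← Finset.sum_filter_add_sum_filter_not Finset.univ (fun p : Fin m => (p:ℕ) < (j:ℕ))]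
    have hset : Finset.univ.filter (fun p : Fin m => ¬ (p:ℕ) < (j:ℕ))
        = insert j (Finset.univ.filter (fun p : Fin m => (j:ℕ) < (p:ℕ))) := by
      ext p
      simp only [Finset.mem_filter, Finset.mem_univ, true_and, Finset.mem_insert]
      constructor
      · intro hp
        rcases Nat.lt_or_ge (j:ℕ) (p:ℕ) with h' | h'
        · exact Or.inr h'
        · exact Or.inl (Fin.ext (by omega))
      · rintro (rfl | hp) <;> omega
    rw [hset, Finset.sum_insert (by simp)]
  -- bound on the tail
  have htail : ∀ v : Fin m → Fin (l+1),
      (∑ p ∈ Finset.univ.filter (fun p : Fin m => (j:ℕ) < (p:ℕ)), (v p : ℕ) * (l+2)^(m-1-(p:ℕ)))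
        < (l+2)^(m-1-(j:ℕ)) := by
    intro v
    have h1 : (∑ p ∈ Finset.univ.filter (fun p : Fin m => (j:ℕ) < (p:ℕ)),
          (v p : ℕ) * (l+2)^(m-1-(p:ℕ)))
        ≤ ∑ p ∈ Finset.univ.filter (fun p : Fin m => (j:ℕ) < (p:ℕ)),
          (l+1) * (l+2)^(m-1-(p:ℕ)) :=
      Finset.sum_le_sum fun p _ => Nat.mul_le_mul_right _ (by have := (v p).2; omega)
    have h2 : (∑ p ∈ Finset.univ.filter (fun p : Fin m => (j:ℕ) < (p:ℕ)),
          (l+1) * (l+2)^(m-1-(p:ℕ)))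
        = ∑ k ∈ (Finset.univ.filter (fun p : Fin m => (j:ℕ) < (p:ℕ))).image
            (fun p : Fin m => m-1-(p:ℕ)), (l+1) * (l+2)^k := by
      rw [Finset.sum_image]
      intro p hp p' hp' he
      simp only [Finset.mem_coe, Finset.mem_filter] at hp hp' he
      exact Fin.ext (by have := p.2; have := p'.2; omega)
    have h3 : (Finset.univ.filter (fun p : Fin m => (j:ℕ) < (p:ℕ))).image
          (fun p : Fin m => m-1-(p:ℕ)) ⊆ Finset.range (m-1-(j:ℕ)) := by
      intro k hk
      simp only [Finset.mem_image, Finset.mem_filter] at hk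
      obtain ⟨p, ⟨-, hp⟩, rfl⟩ := hk
      have := p.2
      have := j.2
      simp only [Finset.mem_range]
      omega
    have h4 : (∑ k ∈ (Finset.univ.filter (fun p : Fin m => (j:ℕ) < (p:ℕ))).image
            (fun p : Fin m => m-1-(p:ℕ)), (l+1) * (l+2)^k)
        ≤ ∑ k ∈ Finset.range (m-1-(j:ℕ)), (l+1) * (l+2)^k :=
      Finset.sum_le_sum_of_subset h3
    have h5 : (∑ k ∈ Finset.range (m-1-(j:ℕ)), (l+1) * (l+2)^k)
        = (l+1) * ∑ k ∈ Finset.range (m-1-(j:ℕ)), (l+2)^k := by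
      rw [Finset.mul_sum]
    have h6 := geo_sum l (m-1-(j:ℕ))
    omega
  have hhead : (∑ p ∈ Finset.univ.filter (fun p : Fin m => (p:ℕ) < (j:ℕ)),
        (w p : ℕ) * (l+2)^(m-1-(p:ℕ)))
      = ∑ p ∈ Finset.univ.filter (fun p : Fin m => (p:ℕ) < (j:ℕ)),
        (t p : ℕ) * (l+2)^(m-1-(p:ℕ)) := by
    apply Finset.sum_congr rfl
    intro p hp
    simp only [Finset.mem_filter] at hp
    rw [hag p hp.2]
  have hmul : ((t j : ℕ) + 1) * (l+2)^(m-1-(j:ℕ)) ≤ (w j : ℕ) * (l+2)^(m-1-(j:ℕ)) :=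
    Nat.mul_le_mul_right _ (by omega)
  have ht := htail t
  rw [hsplit w, hsplit t, hhead]
  have hexp : ((t j : ℕ) + 1) * (l+2)^(m-1-(j:ℕ))
      = (t j : ℕ) * (l+2)^(m-1-(j:ℕ)) + (l+2)^(m-1-(j:ℕ)) := by ring
  omega

/-- the restriction of `ζ` to the invariants
`Sym_m (Sym^l E) ⊆ (Sym^l E)^{⊗m}` is injective. -/
theorem stmt12 (l m : ℕ) (hl : 1 ≤ l) (hm : 1 ≤ m) :
    Function.Injective
      (fun x : SymInv K (↥(homog K l)) m =>
        zeta K l m (x : ⨂[K]^m ↥(homog K l))) := by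
  classical
  have main : ∀ x : ⨂[K]^m ↥(homog K l), x ∈ SymInv K (↥(homog K l)) m →
      zetaAux K l m x = 0 → x = 0 := by
    intro x hinv hz
    by_contra hx
    simp only [SymInv, Submodule.mem_iInf, LinearMap.mem_eqLocus] at hinv
    have hrei : ∀ σ : Equiv.Perm (Fin m),
        (PiTensorProduct.reindex K (fun _ => ↥(homog K l)) σ) x = x := by
      intro σ
      have h := hinv σ
      simpa using h
    have hperm : ∀ (u : Fin m → Fin (l+1)) (σ : Equiv.Perm (Fin m)),
        psi K l m (u ∘ σ) x = psi K l m u x := by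
      intro u σ
      rw [← psi_reindex K l m u σ x, hrei σ]
    set supp : Finset (Fin m → Fin (l+1)) :=
      Finset.univ.filter (fun u => psi K l m u x ≠ 0) with hsupp
    have hsupp_mem : ∀ u, u ∈ supp ↔ psi K l m u x ≠ 0 := by
      intro u; simp [hsupp]
    have hne : supp.Nonempty := by
      rw [Finset.nonempty_iff_ne_empty]
      intro hempty
      apply hx
      rw [tensor_repr K l m x]
      apply Finset.sum_eq_zero
      intro u _
      have hu0 : psi K l m u x = 0 := by
        by_contra hc
        have hmem : u ∈ supp := (hsupp_mem u).mpr hc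
        rw [hempty] at hmem
        exact absurd hmem (Finset.notMem_empty u)
      rw [hu0, zero_smul]
    obtain ⟨t, ht, hmax⟩ := Finset.exists_max_image supp (Nval l m) hne
    have hsupp_perm : ∀ (u : Fin m → Fin (l+1)) (σ : Equiv.Perm (Fin m)),
        u ∈ supp → u ∘ σ ∈ supp := by
      intro u σ hu
      rw [hsupp_mem] at hu ⊢
      rw [hperm u σ]
      exact hu
    -- t is weakly decreasing
    have hadj : ∀ (j : ℕ) (h1 : j + 1 < m), (t ⟨j+1, h1⟩ : ℕ) ≤ (t ⟨j, by omega⟩ : ℕ) := by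
      intro j h1
      by_contra hc
      push_neg at hc
      have hswap : Nval l m t <
          Nval l m (t ∘ Equiv.swap (⟨j, by omega⟩ : Fin m) (⟨j+1, h1⟩ : Fin m)) := by
        apply Nval_lt l m _ t ⟨j, by omega⟩
        · intro p hp
          have hpv : (p : ℕ) < j := hp
          have hpj0 : p ≠ (⟨j, by omega⟩ : Fin m) := fun h => by
            rw [h] at hpv
            exact (by omega : ¬ (j < j)) hpv
          have hpj1 : p ≠ (⟨j+1, h1⟩ : Fin m) := fun h => by
            rw [h] at hpv
            exact (by omega : ¬ (j+1 < j)) hpv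
          simp only [Function.comp_apply, Equiv.swap_apply_of_ne_of_ne hpj0 hpj1]
        · simp only [Function.comp_apply, Equiv.swap_apply_left]
          exact hc
      have hle := hmax _ (hsupp_perm t (Equiv.swap ⟨j, by omega⟩ ⟨j+1, h1⟩) ht)
      omega
    have hanti : ∀ p q : Fin m, (p:ℕ) ≤ (q:ℕ) → (t q : ℕ) ≤ (t p : ℕ) := by
      have main2 : ∀ (d : ℕ) (p : Fin m) (h : (p:ℕ) + d < m),
          (t ⟨(p:ℕ)+d, h⟩ : ℕ) ≤ (t p : ℕ) := by
        intro d
        induction d with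
        | zero => intro p h; simp
        | succ d IHd =>
          intro p h
          have h' : (p:ℕ) + d < m := by omega
          exact le_trans (hadj ((p:ℕ)+d) (by omega)) (IHd p h')
      intro p q hpq
      have hq : q = ⟨(p:ℕ) + ((q:ℕ)-(p:ℕ)), by have := q.2; omega⟩ := Fin.ext (show (q:ℕ) = (p:ℕ) + ((q:ℕ)-(p:ℕ)) by omega)
      rw [hq]
      exact main2 _ p _
    -- S = sIdx l m t is injective
    have hSval : ∀ (u : Fin m → Fin (l+1)) (j : Fin m),
        (sIdx l m u j : ℕ) = (u j : ℕ) + (m-1-(j:ℕ)) := fun u j => rfl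
    have hSmono : ∀ i i' : Fin m, (i:ℕ) < (i':ℕ) → (sIdx l m t i' : ℕ) < (sIdx l m t i : ℕ) := by
      intro i i' h
      have h1 := hanti i i' (le_of_lt h)
      have hi' := i'.2
      rw [hSval, hSval]
      omega
    have hSinj : Function.Injective (sIdx l m t) := by
      intro i i' he
      by_contra hne
      have hv : (i:ℕ) ≠ (i':ℕ) := fun hc => hne (Fin.ext hc)
      rcases lt_or_gt_of_ne hv with h' | h'
      · have := hSmono i i' h'
        rw [he] at this
        omega
      · have := hSmono i' i h'
        rw [he] at this
        omega
    -- compute the functional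
    have hφ : phiF K l m (sIdx l m t) (zetaAux K l m x) = psi K l m t x := by
      have step1 : phiF K l m (sIdx l m t) (zetaAux K l m x)
          = ∑ u : Fin m → Fin (l+1), psi K l m u x *
              (Matrix.of fun j i => if sIdx l m u j = sIdx l m t i then (1:K) else 0).det := by
        conv_lhs => rw [tensor_repr K l m x]
        rw [map_sum, map_sum]
        apply Finset.sum_congr rfl
        intro u _
        rw [map_smul, map_smul, smul_eq_mul]
        congr 1
        rw [zetaAux_tprod]
        rw [show (fun j => mulMono K l m j (bElt K l (u j)))
            = fun j => bElt K (l+m-1) (sIdx l m u j) from funext fun j => mulMono_bElt K l m u j]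
        exact phiF_wedge K l m (sIdx l m t) (sIdx l m u)
      rw [step1, Finset.sum_eq_single t]
      · rw [det01_id K hSinj, mul_one]
      · intro u _ hu
        by_cases hψ : psi K l m u x = 0
        · rw [hψ, zero_mul]
        · have hu_mem : u ∈ supp := (hsupp_mem u).mpr hψ
          have hdet : (Matrix.of fun j i =>
              if sIdx l m u j = sIdx l m t i then (1:K) else 0).det = 0 := by
            by_contra hdet
            obtain ⟨ρ, hρ⟩ := det01_perm K hSinj hdet
            have hρv : ∀ j : Fin m,
                (u j : ℕ) + (m-1-(j:ℕ)) = (t (ρ j) : ℕ) + (m-1-((ρ j):ℕ)) :=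
              fun j => congrArg Fin.val (hρ j)
            have key : ∀ n : ℕ, ∀ j : Fin m, (j:ℕ) = n → u j = t j := by
              intro n
              induction n using Nat.strong_induction_on with
              | _ n IH =>
              intro j hj
              have IH' : ∀ p : Fin m, (p:ℕ) < (j:ℕ) → u p = t p := by
                intro p hp
                exact IH (p:ℕ) (by omega) p rfl
              have hfix : ∀ p : Fin m, (p:ℕ) < (j:ℕ) → ρ p = p := by
                intro p hp
                apply hSinj
                rw [← hρ p]
                apply Fin.ext
                rw [hSval, hSval, IH' p hp]
              have hj0' : (j:ℕ) ≤ ((ρ.symm j : Fin m):ℕ) := by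
                by_contra hc
                push_neg at hc
                have hfx := hfix (ρ.symm j) hc
                have h2 := Equiv.apply_symm_apply ρ j
                rw [hfx] at h2
                have := congrArg Fin.val h2
                omega
              rcases eq_or_lt_of_le hj0' with heq | hlt2
              · have hjj : ρ.symm j = j := Fin.ext heq.symm
                have h2 := Equiv.apply_symm_apply ρ j
                rw [hjj] at h2
                have hv := hρv j
                rw [h2] at hv
                exact Fin.ext (by omega)
              · exfalso
                set j0 : Fin m := ρ.symm j with hj0def
                have hρj0 : ρ j0 = j := Equiv.apply_symm_apply ρ j
                have hv := hρv j0
                rw [hρj0] at hv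
                have hj0m := j0.2
                have huj0 : (t j : ℕ) < (u j0 : ℕ) := by omega
                have hsw : Nval l m t < Nval l m (u ∘ Equiv.swap j j0) := by
                  apply Nval_lt l m _ t j
                  · intro p hp
                    have hpj : p ≠ j := fun h => by rw [h] at hp; omega
                    have hpj0 : p ≠ j0 := fun h => by
                      rw [h] at hp
                      omega
                    simp only [Function.comp_apply, Equiv.swap_apply_of_ne_of_ne hpj hpj0]
                    exact IH' p hp
                  · simp only [Function.comp_apply, Equiv.swap_apply_left]
                    exact huj0
                have hle := hmax _ (hsupp_perm u (Equiv.swap j j0) hu_mem)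
                omega
            exact hu (funext fun j => key (j:ℕ) j rfl)
          rw [hdet, mul_zero]
      · intro h
        exact absurd (Finset.mem_univ t) h
    rw [hz, map_zero] at hφ
    exact (hsupp_mem t).mp ht hφ.symm
  intro a b hab
  have h2 : zetaAux K l m (a : ⨂[K]^m ↥(homog K l))
      = zetaAux K l m (b : ⨂[K]^m ↥(homog K l)) := congrArg Subtype.val hab
  have h1 : zetaAux K l m ((a : ⨂[K]^m ↥(homog K l)) - b) = 0 := by
    rw [map_sub, h2, sub_self]
  have h3 := main _ (by rw [sub_eq_add_neg, ← neg_one_smul K (b : ⨂[K]^m ↥(homog K l))]; exact Submodule.add_mem _ a.2 (Submodule.smul_mem _ _ b.2)) h1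
  exact Subtype.ext (sub_eq_zero.mp h3)

end
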